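/- Let P be a partially ordered set and H : P → P an isotone (monotone) operation such that H(H(x)) ≤ H(x) for every x ∈ P. If every nonempty chain contained in the range of H has a greatest lower bound in P, then there exists an operation K : P → P which is isotone, idempotent (K(K(x)) = K(x) for all x), pointwise smaller than H (K(x) ≤ H(x) for all x), and largest such: every isotone idempotent operation J : P → P with J(x) ≤ H(x) for all x satisfies J(x) ≤ K(x) for all x. -/

import Mathlib

open Ordinal

universe u

section Aux
variable {P : Type u} [PartialOrder P]

open Classical in
/-- Transfinite iteration of `H` starting at `H x`, taking (a choice of) glb at limits. -/
noncomputable def iterSeq (H : P → P) (x : P) (α : Ordinal.{u}) : P :=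
  Ordinal.limitRecOn α (H x) (fun _ ih => H ih)
    (fun o _ ih =>
      H (if h : ∃ g, IsGLB {p | ∃ β, ∃ hβ : β < o, ih β hβ = p} g then h.choose else x))

theorem iterSeq_zero (H : P → P) (x : P) : iterSeq H x 0 = H x :=
  Ordinal.limitRecOn_zero _ _ _

theorem iterSeq_succ (H : P → P) (x : P) (α : Ordinal.{u}) :
    iterSeq H x (Order.succ α) = H (iterSeq H x α) :=
  Ordinal.limitRecOn_succ _ _ _ _

open Classical in
theorem iterSeq_limit (H : P → P) (x : P) {o : Ordinal.{u}} (ho : Order.IsSuccLimit o) :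
    iterSeq H x o =
      H (if h : ∃ g, IsGLB {p | ∃ β, ∃ _ : β < o, iterSeq H x β = p} g
          then h.choose else x) :=
  Ordinal.limitRecOn_limit _ _ _ _ ho

theorem iterSeq_mem_range (H : P → P) (x : P) (α : Ordinal.{u}) :
    iterSeq H x α ∈ Set.range H := by
  rcases Ordinal.zero_or_succ_or_isSuccLimit α with h | ⟨β, rfl⟩ | h
  · subst h; rw [iterSeq_zero]; exact ⟨x, rfl⟩
  · rw [iterSeq_succ]; exact ⟨_, rfl⟩
  · rw [iterSeq_limit H x h]; exact ⟨_, rfl⟩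

variable {H : P → P} (hmono : Monotone H) (hHH : ∀ x, H (H x) ≤ H x)
  (hchain : ∀ C : Set P, C ⊆ Set.range H → IsChain (· ≤ ·) C → C.Nonempty →
      ∃ g, IsGLB C g)

include hHH in
theorem iterSeq_self_le (x : P) (α : Ordinal.{u}) :
    H (iterSeq H x α) ≤ iterSeq H x α := by
  obtain ⟨y, hy⟩ := iterSeq_mem_range H x α
  rw [← hy]; exact hHH y

include hmono hHH hchain in
theorem iterSeq_antitone (x : P) :
    ∀ α : Ordinal.{u}, ∀ β ≤ α, iterSeq H x α ≤ iterSeq H x β := by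
  intro α
  induction α using Ordinal.induction with
  | h α IH =>
    rcases Ordinal.zero_or_succ_or_isSuccLimit α with h0 | ⟨γ, rfl⟩ | hlim
    · subst h0; intro β hβ; rw [nonpos_iff_eq_zero.mp hβ]
    · intro β hβ
      rcases eq_or_lt_of_le hβ with rfl | hβ'
      · exact le_rfl
      · have hβγ : β ≤ γ := Order.lt_succ_iff.mp hβ'
        calc iterSeq H x (Order.succ γ) = H (iterSeq H x γ) := iterSeq_succ H x γ
          _ ≤ iterSeq H x γ := iterSeq_self_le hHH x γ
          _ ≤ iterSeq H x β := IH γ (Order.lt_succ γ) β hβγ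
    · -- limit case
      classical
      set C : Set P := {p | ∃ β, ∃ _ : β < α, iterSeq H x β = p} with hC
      have hsub : C ⊆ Set.range H := by
        rintro p ⟨β, hβ, rfl⟩; exact iterSeq_mem_range H x β
      have hch : IsChain (· ≤ ·) C := by
        rintro p ⟨β, hβ, rfl⟩ q ⟨γ, hγ, rfl⟩ _
        rcases le_total β γ with h | h
        · exact Or.inr (IH γ hγ β h)
        · exact Or.inl (IH β hβ γ h)
      have hne : C.Nonempty := ⟨iterSeq H x 0, 0, hlim.pos, rfl⟩
      have hex : ∃ g, IsGLB C g := hchain C hsub hch hne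
      have heq : iterSeq H x α = H hex.choose := by
        rw [iterSeq_limit H x hlim, dif_pos hex]
      have hglb : IsGLB C hex.choose := hex.choose_spec
      intro β hβ
      rcases eq_or_lt_of_le hβ with rfl | hβ'
      · exact le_rfl
      · have h1 : hex.choose ≤ iterSeq H x β := hglb.1 ⟨β, hβ', rfl⟩
        calc iterSeq H x α = H hex.choose := heq
          _ ≤ H (iterSeq H x β) := hmono h1
          _ ≤ iterSeq H x β := iterSeq_self_le hHH x β

include hmono hHH hchain in
theorem iterSeq_limit_glb (x : P) {α : Ordinal.{u}} (hlim : Order.IsSuccLimit α) :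
    ∃ g, IsGLB {p | ∃ β, ∃ _ : β < α, iterSeq H x β = p} g ∧ iterSeq H x α = H g := by
  classical
  set C : Set P := {p | ∃ β, ∃ _ : β < α, iterSeq H x β = p}
  have hsub : C ⊆ Set.range H := by
    rintro p ⟨β, hβ, rfl⟩; exact iterSeq_mem_range H x β
  have hch : IsChain (· ≤ ·) C := by
    rintro p ⟨β, hβ, rfl⟩ q ⟨γ, hγ, rfl⟩ _
    rcases le_total β γ with h | h
    · exact Or.inr (iterSeq_antitone hmono hHH hchain x γ β h)
    · exact Or.inl (iterSeq_antitone hmono hHH hchain x β γ h)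
  have hne : C.Nonempty := ⟨iterSeq H x 0, 0, hlim.pos, rfl⟩
  have hex : ∃ g, IsGLB C g := hchain C hsub hch hne
  exact ⟨hex.choose, hex.choose_spec, by rw [iterSeq_limit H x hlim, dif_pos hex]⟩

include hmono hHH hchain in
theorem iterSeq_mono {x y : P} (hxy : x ≤ y) :
    ∀ α : Ordinal.{u}, iterSeq H x α ≤ iterSeq H y α := by
  intro α
  induction α using Ordinal.induction with
  | h α IH =>
    rcases Ordinal.zero_or_succ_or_isSuccLimit α with h0 | ⟨γ, rfl⟩ | hlim
    · subst h0; rw [iterSeq_zero, iterSeq_zero]; exact hmono hxy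
    · rw [iterSeq_succ, iterSeq_succ]; exact hmono (IH γ (Order.lt_succ γ))
    · obtain ⟨gx, hgx, hx⟩ := iterSeq_limit_glb hmono hHH hchain x hlim
      obtain ⟨gy, hgy, hy⟩ := iterSeq_limit_glb hmono hHH hchain y hlim
      have : gx ≤ gy := by
        apply hgy.2
        rintro q ⟨β, hβ, rfl⟩
        exact (hgx.1 ⟨β, hβ, rfl⟩).trans (IH β hβ)
      rw [hx, hy]; exact hmono this

include hmono hHH hchain in
theorem iterSeq_stabilize {x : P} {γ : Ordinal.{u}}
    (hfix : H (iterSeq H x γ) = iterSeq H x γ) :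
    ∀ α : Ordinal.{u}, γ ≤ α → iterSeq H x α = iterSeq H x γ := by
  intro α
  induction α using Ordinal.induction with
  | h α IH =>
    intro hγα
    rcases eq_or_lt_of_le hγα with rfl | hγα'
    · rfl
    rcases Ordinal.zero_or_succ_or_isSuccLimit α with h0 | ⟨β, rfl⟩ | hlim
    · subst h0; exact absurd hγα' (not_lt_zero (a := γ))
    · have hγβ : γ ≤ β := Order.lt_succ_iff.mp hγα'
      rw [iterSeq_succ, IH β (Order.lt_succ β) hγβ, hfix]
    · obtain ⟨g, hg, heq⟩ := iterSeq_limit_glb hmono hHH hchain x hlim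
      have hgval : g = iterSeq H x γ := by
        apply le_antisymm
        · exact hg.1 ⟨γ, hγα', rfl⟩
        · apply hg.2
          rintro q ⟨β, hβ, rfl⟩
          rcases le_total γ β with h | h
          · rw [IH β hβ h]
          · exact iterSeq_antitone hmono hHH hchain x γ β h
      rw [heq, hgval, hfix]

include hmono hHH hchain in
theorem iterSeq_exists_fixed (x : P) :
    ∃ γ : Ordinal.{u}, H (iterSeq H x γ) = iterSeq H x γ := by
  by_contra hcon
  push_neg at hcon
  have hstrict : StrictAnti (iterSeq H x) := by
    intro β α hβα
    have h1 : iterSeq H x α ≤ iterSeq H x (Order.succ β) :=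
      iterSeq_antitone hmono hHH hchain x α (Order.succ β) (Order.succ_le_of_lt hβα)
    have h2 : iterSeq H x (Order.succ β) ≤ iterSeq H x β :=
      iterSeq_antitone hmono hHH hchain x (Order.succ β) β (le_of_lt (Order.lt_succ β))
    have h3 : iterSeq H x (Order.succ β) ≠ iterSeq H x β := by
      rw [iterSeq_succ]; exact hcon β
    exact h1.trans_lt (lt_of_le_of_ne h2 h3)
  exact not_injective_of_ordinal (iterSeq H x) hstrict.injective

end Aux

/-- Lemma: if `H` is isotone with `H (H x) ≤ H x` and every nonempty chain in the
range of `H` has a greatest lower bound, then there is a largest isotone idempotent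
operation pointwise smaller than `H`. -/
theorem largest_isotone_idempotent_below {P : Type*} [PartialOrder P] (H : P → P)
    (hmono : Monotone H) (hHH : ∀ x, H (H x) ≤ H x)
    (hchain : ∀ C : Set P, C ⊆ Set.range H → IsChain (· ≤ ·) C → C.Nonempty →
      ∃ g, IsGLB C g) :
    ∃ K : P → P, Monotone K ∧ (∀ x, K (K x) = K x) ∧ (∀ x, K x ≤ H x) ∧
      ∀ J : P → P, Monotone J → (∀ x, J (J x) = J x) → (∀ x, J x ≤ H x) →
        ∀ x, J x ≤ K x := by
  classical
  have hfix := fun x => iterSeq_exists_fixed hmono hHH hchain x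
  set stage : P → Ordinal := fun x => (hfix x).choose with hstage
  have hstagefix : ∀ x, H (iterSeq H x (stage x)) = iterSeq H x (stage x) :=
    fun x => (hfix x).choose_spec
  set K : P → P := fun x => iterSeq H x (stage x) with hK
  have hKval : ∀ x (α : Ordinal), stage x ≤ α → iterSeq H x α = K x :=
    fun x α h => iterSeq_stabilize hmono hHH hchain (hstagefix x) α h
  have hKfix : ∀ x, H (K x) = K x := hstagefix
  refine ⟨K, ?_, ?_, ?_, ?_⟩
  · -- monotone
    intro x y hxy
    set γ := max (stage x) (stage y)
    calc K x = iterSeq H x γ := (hKval x γ (le_max_left _ _)).symm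
      _ ≤ iterSeq H y γ := iterSeq_mono hmono hHH hchain hxy γ
      _ = K y := hKval y γ (le_max_right _ _)
  · -- idempotent
    intro x
    have h0 : iterSeq H (K x) 0 = K x := by rw [iterSeq_zero, hKfix]
    have hfix0 : H (iterSeq H (K x) 0) = iterSeq H (K x) 0 := by rw [h0, hKfix]
    have hc := iterSeq_stabilize hmono hHH hchain hfix0 (stage (K x)) zero_le
    show iterSeq H (K x) (stage (K x)) = K x
    rw [hc, h0]
  · -- K ≤ H
    intro x
    calc K x = iterSeq H x (stage x) := rfl
      _ ≤ iterSeq H x 0 := iterSeq_antitone hmono hHH hchain x (stage x) 0 zero_le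
      _ = H x := iterSeq_zero H x
  · -- largest
    intro J hJmono hJidem hJle x
    have hall : ∀ α : Ordinal, J x ≤ iterSeq H x α := by
      intro α
      induction α using Ordinal.induction with
      | h α IH =>
        rcases Ordinal.zero_or_succ_or_isSuccLimit α with h0 | ⟨β, rfl⟩ | hlim
        · subst h0; rw [iterSeq_zero]; exact hJle x
        · rw [iterSeq_succ]
          calc J x = J (J x) := (hJidem x).symm
            _ ≤ J (iterSeq H x β) := hJmono (IH β (Order.lt_succ β))
            _ ≤ H (iterSeq H x β) := hJle _
        · obtain ⟨g, hg, heq⟩ := iterSeq_limit_glb hmono hHH hchain x hlim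
          have hJg : J x ≤ g := hg.2 (by rintro q ⟨β, hβ, rfl⟩; exact IH β hβ)
          rw [heq]
          calc J x = J (J x) := (hJidem x).symm
            _ ≤ J g := hJmono hJg
            _ ≤ H g := hJle g
    exact hall (stage x)
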